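/- (Chebyshev's theorem, in stereographic coordinates.) Let Ω ⊆ ℂ be a nonempty bounded connected open set, and let V ⊆ ℂ be an open set containing the closure of Ω. For a function g holomorphic on V, define its scale factor σ_g : V → ℝ by σ_g(z) = |g'(z)| · (1 + |z|²)/2 (this is the infinitesimal dilatation of the map of the round unit sphere to the plane obtained by composing the inverse stereographic projection with g). Let h and g be holomorphic on V with h'(z) ≠ 0 and g'(z) ≠ 0 for all z in the closure of Ω, and suppose σ_h is constant on the frontier of Ω. Then (sup of σ_h over the closure of Ω)/(inf of σ_h over the closure of Ω) ≤ (sup of σ_g over the closure of Ω)/(inf of σ_g over the closure of Ω); that is, among all such conformal representations, the one whose scale factor is constant on the boundary minimizes the ratio of the largest to the smallest infinitesimal dilatation. -/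

import Mathlib

open Complex

/-- The infinitesimal dilatation (scale factor) at `z` of the map of the round unit
sphere to the plane obtained by composing the inverse stereographic projection with a
holomorphic map `g`, in the stereographic coordinate `z`. -/
noncomputable def scaleFactor (g : ℂ → ℂ) (z : ℂ) : ℝ :=
  ‖deriv g z‖ * (1 + ‖z‖ ^ 2) / 2

/-- Pythagorean identity underlying Cauchy–Schwarz on `ℂ²` for the vectors `(1, a)`, `(1, z)`. -/
lemma scaleFactor_key_id (a z : ℂ) :
    (‖1 + (starRingEnd ℂ) a * z‖) ^ 2 + (‖z - a‖) ^ 2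
      = (1 + ‖a‖ ^ 2) * (1 + ‖z‖ ^ 2) := by
  simp only [Complex.sq_norm, Complex.normSq_apply, Complex.add_re,
    Complex.add_im, Complex.mul_re, Complex.mul_im, Complex.sub_re, Complex.sub_im,
    Complex.one_re, Complex.one_im, Complex.conj_re, Complex.conj_im]
  ring

/-- Chebyshev's theorem, in stereographic coordinates: among conformal maps of a region
of the sphere to the plane, one whose infinitesimal dilatation is constant on the
boundary minimizes the ratio of the largest to the smallest infinitesimal dilatation. -/
theorem chebyshev_min_distortion (Ω : Set ℂ) (hΩo : IsOpen Ω) (hΩne : Ω.Nonempty)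
    (hΩb : Bornology.IsBounded Ω) (hΩc : IsConnected Ω)
    (V : Set ℂ) (hV : IsOpen V) (hΩV : closure Ω ⊆ V)
    (h g : ℂ → ℂ)
    (hh : DifferentiableOn ℂ h V) (hg : DifferentiableOn ℂ g V)
    (hh' : ∀ z ∈ closure Ω, deriv h z ≠ 0) (hg' : ∀ z ∈ closure Ω, deriv g z ≠ 0)
    (hconst : ∃ k : ℝ, ∀ z ∈ frontier Ω, scaleFactor h z = k) :
    sSup (scaleFactor h '' closure Ω) / sInf (scaleFactor h '' closure Ω) ≤
      sSup (scaleFactor g '' closure Ω) / sInf (scaleFactor g '' closure Ω) := by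
  obtain ⟨k, hk⟩ := hconst
  set K := closure Ω with hKdef
  have hKc : IsCompact K := hΩb.isCompact_closure
  have hKne : K.Nonempty := hΩne.closure
  have hΩK : Ω ⊆ K := subset_closure
  have hfrK : frontier Ω ⊆ K := frontier_subset_closure
  -- derivatives are differentiable on V
  have hhd : DifferentiableOn ℂ (deriv h) V := ((hh.analyticOnNhd hV).deriv).differentiableOn
  have hgd : DifferentiableOn ℂ (deriv g) V := ((hg.analyticOnNhd hV).deriv).differentiableOn
  -- continuity of the scale factors on V
  have habs : ∀ f : ℂ → ℂ, DifferentiableOn ℂ f V → ContinuousOn (scaleFactor f) V := by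
    intro f hf
    have h1 : ContinuousOn (fun z => ‖deriv f z‖) V :=
      continuous_norm.comp_continuousOn
        ((hf.analyticOnNhd hV).deriv).differentiableOn.continuousOn
    have h2 : ContinuousOn (fun z : ℂ => 1 + ‖z‖ ^ 2) V :=
      (continuous_const.add (continuous_norm.pow 2)).continuousOn
    exact (h1.mul h2).div_const 2
  have hch : ContinuousOn (scaleFactor h) K := (habs h hh).mono hΩV
  have hcg : ContinuousOn (scaleFactor g) K := (habs g hg).mono hΩV
  -- positivity
  have hwpos : ∀ z : ℂ, (0:ℝ) < 1 + ‖z‖ ^ 2 := fun z => by positivity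
  have hhpos : ∀ z ∈ K, (0:ℝ) < scaleFactor h z := by
    intro z hz
    have h1 : ‖deriv h z‖ > 0 := by
      simpa [norm_pos_iff] using hh' z hz
    have h2 := hwpos z
    unfold scaleFactor
    positivity
  have hgpos : ∀ z ∈ K, (0:ℝ) < scaleFactor g z := by
    intro z hz
    have h1 : ‖deriv g z‖ > 0 := by
      simpa [norm_pos_iff] using hg' z hz
    have h2 := hwpos z
    unfold scaleFactor
    positivity
  -- quotient of scale factors is the modulus of g'/h'
  have hquot : ∀ z ∈ K, ‖deriv g z / deriv h z‖
      = scaleFactor g z / scaleFactor h z := by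
    intro z hz
    have h1 : ‖deriv h z‖ ≠ 0 := by
      simpa [norm_ne_zero_iff] using hh' z hz
    have h2 : (1 + ‖z‖ ^ 2) ≠ 0 := ne_of_gt (hwpos z)
    rw [norm_div]
    unfold scaleFactor
    field_simp
  -- the open set where deriv h is nonzero
  have hUopen : IsOpen (V ∩ deriv h ⁻¹' {(0:ℂ)}ᶜ) :=
    hhd.continuousOn.isOpen_inter_preimage hV isOpen_compl_singleton
  have hKU : K ⊆ V ∩ deriv h ⁻¹' {(0:ℂ)}ᶜ := fun z hz => ⟨hΩV hz, hh' z hz⟩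
  have hFdiff : DifferentiableOn ℂ (fun z => deriv g z / deriv h z)
      (V ∩ deriv h ⁻¹' {(0:ℂ)}ᶜ) :=
    (hgd.mono Set.inter_subset_left).div (hhd.mono Set.inter_subset_left)
      (fun z hz => hz.2)
  -- minimum modulus principle: σ_g/σ_h attains its max on K at a frontier point
  obtain ⟨z₁, hz₁fr, hz₁max⟩ :
      ∃ z ∈ frontier Ω, IsMaxOn (norm ∘ fun z => deriv g z / deriv h z) K z := by
    apply Complex.exists_mem_frontier_isMaxOn_norm hΩb hΩne
    exact ⟨hFdiff.mono (hΩK.trans hKU), hFdiff.continuousOn.mono hKU⟩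
  have hz₁K : z₁ ∈ K := hfrK hz₁fr
  have hratio : ∀ z ∈ K, scaleFactor g z / scaleFactor h z
      ≤ scaleFactor g z₁ / scaleFactor h z₁ := by
    intro z hz
    have h0 := isMaxOn_iff.mp hz₁max z hz
    simp only [Function.comp] at h0
    rw [hquot z hz, hquot z₁ hz₁K] at h0
    exact h0
  -- extremal points
  obtain ⟨zG, hzGK, hzGmax⟩ := hKc.exists_isMaxOn hKne hcg
  obtain ⟨zg, hzgK, hzgmin⟩ := hKc.exists_isMinOn hKne hcg
  obtain ⟨zm, hzmK, hzmmin⟩ := hKc.exists_isMinOn hKne hch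
  obtain ⟨z₀, hz₀K, hz₀max⟩ := hKc.exists_isMaxOn hKne hch
  -- the maximum of σ_h over K is attained at a frontier point
  have hz₀fr : z₀ ∈ frontier Ω := by
    by_contra hfr
    have hz₀Ω : z₀ ∈ Ω := by
      by_contra hΩmem
      exact hfr (hΩo.frontier_eq ▸ ⟨hz₀K, hΩmem⟩)
    set G : ℂ → ℂ := fun z => deriv h z * (1 + (starRingEnd ℂ) z₀ * z) ^ 2 with hGdef
    have hGdiff : DifferentiableOn ℂ G V := by
      apply hhd.mul
      exact (((differentiable_const _).add
        ((differentiable_const _).mul differentiable_id)).pow 2).differentiableOn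
    have habsG : ∀ z : ℂ, ‖G z‖
        = ‖deriv h z‖ * ‖1 + (starRingEnd ℂ) z₀ * z‖ ^ 2 := by
      intro z; rw [hGdef]; simp [norm_mul, norm_pow]
    have hA0 : ‖1 + (starRingEnd ℂ) z₀ * z₀‖ ^ 2
        = (1 + ‖z₀‖ ^ 2) * (1 + ‖z₀‖ ^ 2) := by
      have := scaleFactor_key_id z₀ z₀
      simpa using this
    have hGmax : IsMaxOn (norm ∘ G) Ω z₀ := by
      intro z hz
      have hCS : ‖1 + (starRingEnd ℂ) z₀ * z‖ ^ 2
          ≤ (1 + ‖z₀‖ ^ 2) * (1 + ‖z‖ ^ 2) := by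
        have := scaleFactor_key_id z₀ z
        nlinarith [sq_nonneg (‖z - z₀‖)]
      have hle : scaleFactor h z ≤ scaleFactor h z₀ := isMaxOn_iff.mp hz₀max z (hΩK hz)
      have hle2 : ‖deriv h z‖ * (1 + ‖z‖ ^ 2)
          ≤ ‖deriv h z₀‖ * (1 + ‖z₀‖ ^ 2) := by
        unfold scaleFactor at hle; linarith
      simp only [Function.comp, Set.mem_setOf_eq, habsG, hA0]
      nlinarith [norm_nonneg (deriv h z), hwpos z₀, hwpos z,
        norm_nonneg (deriv h z₀)]
    have hGeq := Complex.eqOn_of_isPreconnected_of_isMaxOn_norm hΩc.isPreconnected hΩo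
      (hGdiff.mono (hΩK.trans hΩV)) hz₀Ω hGmax
    obtain ⟨ε, hε, hball⟩ := Metric.isOpen_iff.mp hΩo z₀ hz₀Ω
    set z : ℂ := z₀ + (ε / 2 : ℝ) with hzdef
    have hzΩ : z ∈ Ω := by
      apply hball
      simp only [Metric.mem_ball, Complex.dist_eq, hzdef, add_sub_cancel_left]
      rw [Complex.norm_real, Real.norm_eq_abs]
      rw [abs_of_pos (by linarith)]
      linarith
    have hzne : z ≠ z₀ := by
      simp only [hzdef, ne_eq, add_eq_left]
      exact_mod_cast by positivity
    have hEq : ‖G z‖ = ‖G z₀‖ := by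
      rw [hGeq hzΩ]; rfl
    rw [habsG, habsG, hA0] at hEq
    -- derive a contradiction with maximality of σ_h at z₀
    have hqpos : 0 < ‖deriv h z₀‖ := by
      simpa [norm_pos_iff] using hh' z₀ hz₀K
    have hB2 : 0 < ‖z - z₀‖ ^ 2 := by
      have : z - z₀ ≠ 0 := sub_ne_zero.mpr hzne
      have := norm_pos_iff.mpr this
      positivity
    have hkey := scaleFactor_key_id z₀ z
    have hppos : 0 < ‖deriv h z‖ := by
      simpa [norm_pos_iff] using hh' z (hΩK hzΩ)
    have hgt : scaleFactor h z₀ < scaleFactor h z := by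
      unfold scaleFactor
      rw [div_lt_div_iff₀ (by norm_num) (by norm_num)]
      nlinarith [hwpos z₀, hwpos z, mul_pos hppos hB2, mul_pos (hwpos z₀) (hwpos z)]
    exact absurd (isMaxOn_iff.mp hz₀max z (hΩK hzΩ)) (not_le.mpr hgt)
  -- identify sSup and sInf with the extremal values
  have hMh : sSup (scaleFactor h '' K) = scaleFactor h z₀ :=
    IsGreatest.csSup_eq ⟨⟨z₀, hz₀K, rfl⟩, by
      rintro y ⟨w, hw, rfl⟩; exact isMaxOn_iff.mp hz₀max w hw⟩
  have hmh : sInf (scaleFactor h '' K) = scaleFactor h zm :=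
    IsLeast.csInf_eq ⟨⟨zm, hzmK, rfl⟩, by
      rintro y ⟨w, hw, rfl⟩; exact isMinOn_iff.mp hzmmin w hw⟩
  have hMg : sSup (scaleFactor g '' K) = scaleFactor g zG :=
    IsGreatest.csSup_eq ⟨⟨zG, hzGK, rfl⟩, by
      rintro y ⟨w, hw, rfl⟩; exact isMaxOn_iff.mp hzGmax w hw⟩
  have hmg : sInf (scaleFactor g '' K) = scaleFactor g zg :=
    IsLeast.csInf_eq ⟨⟨zg, hzgK, rfl⟩, by
      rintro y ⟨w, hw, rfl⟩; exact isMinOn_iff.mp hzgmin w hw⟩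
  rw [hMh, hmh, hMg, hmg]
  have hz₁z₀ : scaleFactor h z₁ = scaleFactor h z₀ := by
    rw [hk z₁ hz₁fr, hk z₀ hz₀fr]
  have hr := hratio zm hzmK
  rw [div_le_div_iff₀ (hhpos zm hzmK) (hhpos z₁ hz₁K)] at hr
  -- hr : σg zm * σh z₁ ≤ σg z₁ * σh zm
  rw [div_le_div_iff₀ (hhpos zm hzmK) (hgpos zg hzgK)]
  have h3 : scaleFactor g zg ≤ scaleFactor g zm := isMinOn_iff.mp hzgmin zm hzmK
  have h4 : scaleFactor g z₁ ≤ scaleFactor g zG := isMaxOn_iff.mp hzGmax z₁ hz₁K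
  nlinarith [hhpos z₁ hz₁K, hhpos zm hzmK, hgpos zm hzmK,
    mul_le_mul_of_nonneg_left h3 (le_of_lt (hhpos z₁ hz₁K)),
    mul_le_mul_of_nonneg_right h4 (le_of_lt (hhpos zm hzmK))]
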